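/- If a sorted opinion vector x ∈ ℝ^n is symmetric about its midpoint, i.e., x(i) + x(n+1-i) = c for all i and some constant c, then its HK update y is also symmetric about the same midpoint: y(i) + y(n+1-i) = c for all i. -/

import Mathlib

open scoped Classical

/-- The Hegselmann-Krause update with confidence bound 1. -/
noncomputable def hkUpdate {n : ℕ} (x : Fin n → ℝ) : Fin n → ℝ := fun i =>
  (∑ j ∈ Finset.univ.filter (fun j => |x j - x i| ≤ 1), x j) /
    ((Finset.univ.filter (fun j => |x j - x i| ≤ 1)).card : ℝ)

/-- The HK update preserves symmetry about the midpoint: if x(i) + x(n+1-i) = c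
for all i, the same holds for the update. -/
theorem hk_update_symmetric {n : ℕ} (x : Fin n → ℝ) (hx : Monotone x) (c : ℝ)
    (hsym : ∀ i : Fin n, x i + x i.rev = c) :
    ∀ i : Fin n, hkUpdate x i + hkUpdate x i.rev = c := by
  intro i
  have key : ∀ j k : Fin n, x j - x k.rev = x k - x j.rev := by
    intro j k
    have hj := hsym j; have hk := hsym k
    linarith
  set s := Finset.univ.filter (fun j => |x j - x i| ≤ 1) with hs
  have hmem : ∀ j : Fin n,
      (j ∈ Finset.univ.filter (fun j => |x j - x i.rev| ≤ 1)) ↔ j.rev ∈ s := by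
    intro j
    simp only [hs, Finset.mem_filter, Finset.mem_univ, true_and]
    rw [key j i, abs_sub_comm]
  have hinj : Function.Injective (Fin.rev : Fin n → Fin n) := Fin.rev_injective
  have ht : Finset.univ.filter (fun j => |x j - x i.rev| ≤ 1) = s.image Fin.rev := by
    ext j
    rw [hmem]
    constructor
    · intro h; exact Finset.mem_image.2 ⟨j.rev, h, Fin.rev_rev j⟩
    · intro h
      obtain ⟨k, hk, rfl⟩ := Finset.mem_image.1 h
      simpa [Fin.rev_rev] using hk
  have hcard : (s.image Fin.rev).card = s.card := Finset.card_image_of_injective _ hinj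
  have hsum : ∑ j ∈ s.image Fin.rev, x j = ∑ j ∈ s, x j.rev :=
    Finset.sum_image (fun a _ b _ h => hinj h)
  have hne : s.Nonempty := ⟨i, by simp [hs]⟩
  have hcard0 : (s.card : ℝ) ≠ 0 := by
    exact_mod_cast Finset.card_ne_zero_of_mem hne.choose_spec
  have hsum2 : ∑ j ∈ s, x j.rev = s.card * c - ∑ j ∈ s, x j := by
    have h : ∀ j ∈ s, x j.rev = c - x j := fun j _ => by have := hsym j; linarith
    rw [Finset.sum_congr rfl h, Finset.sum_sub_distrib, Finset.sum_const, nsmul_eq_mul]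
  unfold hkUpdate
  rw [ht, hcard, hsum, hsum2]
  field_simp
  rw [← hs]
  ring
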